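/- If χ: [a,b] → [0,∞) is C¹ with χ(a)=0, χ(b)=1, and sup_{t∈[a,b]}(χ'(t)² − A²χ(t)²) < A²/sinh²(A(b−a)) where A > 0, then there exists δ > 0 such that χ(t) < sinh(A(t−a))/sinh(A(b−a)) for all t ∈ (a, a+δ]. -/

import Mathlib

theorem stmt2 (A a b : ℝ) (hA : 0 < A) (hab : a < b)
    (χ : ℝ → ℝ) (hχ : ContDiff ℝ 1 χ) (hpos : ∀ t ∈ Set.Icc a b, 0 ≤ χ t)
    (ha : χ a = 0) (hb : χ b = 1)
    (hsup : sSup ((fun t => (deriv χ t) ^ 2 - A ^ 2 * (χ t) ^ 2) '' Set.Icc a b)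
      < A ^ 2 / Real.sinh (A * (b - a)) ^ 2) :
    ∃ δ > 0, a + δ ≤ b ∧ ∀ t ∈ Set.Ioc a (a + δ),
      χ t < Real.sinh (A * (t - a)) / Real.sinh (A * (b - a)) := by
  set s := Real.sinh (A * (b - a)) with hs_def
  have hs : 0 < s := Real.sinh_pos_iff.2 (mul_pos hA (by linarith))
  have hχd : Continuous (deriv χ) := (hχ.continuous_deriv le_rfl)
  have hχc : Continuous χ := hχ.continuous
  -- J(a) ≤ sSup
  have hbdd : BddAbove ((fun t => (deriv χ t) ^ 2 - A ^ 2 * (χ t) ^ 2) '' Set.Icc a b) := by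
    apply (isCompact_Icc.image (by continuity)).bddAbove
  have hmem : (deriv χ a) ^ 2 ∈ ((fun t => (deriv χ t) ^ 2 - A ^ 2 * (χ t) ^ 2) '' Set.Icc a b) := by
    refine ⟨a, ⟨le_rfl, hab.le⟩, ?_⟩
    simp [ha]
  have hJa : (deriv χ a) ^ 2 < (A / s) ^ 2 := by
    rw [div_pow]
    exact (le_csSup hbdd hmem).trans_lt hsup
  have hda : deriv χ a < A / s := by
    nlinarith [hs, div_pos hA hs]
  -- the comparison function
  set G : ℝ → ℝ := fun t => A * Real.cosh (A * (t - a)) / s - deriv χ t with hG_def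
  have hsinh : ∀ t : ℝ, HasDerivAt (fun t => Real.sinh (A * (t - a)) / s)
      (A * Real.cosh (A * (t - a)) / s) t := by
    intro t
    have h1 : HasDerivAt (fun t : ℝ => A * (t - a)) A t := by
      simpa using (((hasDerivAt_id t).sub_const a).const_mul A)
    have h2 := (Real.hasDerivAt_sinh (A * (t - a))).comp t h1
    simpa [mul_comm] using h2.div_const s
  set g : ℝ → ℝ := fun t => Real.sinh (A * (t - a)) / s - χ t with hg_def
  have hgd : ∀ t : ℝ, HasDerivAt g (G t) t := fun t =>
    (hsinh t).sub ((hχ.differentiable one_ne_zero t).hasDerivAt)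
  have hGcont : Continuous G := by
    apply Continuous.sub _ hχd
    continuity
  have hGa : 0 < G a := by
    simp only [hG_def, sub_self, mul_zero, Real.cosh_zero, mul_one]
    linarith
  have hev : ∀ᶠ t in nhds a, 0 < G t :=
    hGcont.continuousAt.eventually (eventually_gt_nhds hGa)
  obtain ⟨ε, hε, hball⟩ := Metric.eventually_nhds_iff.mp hev
  refine ⟨min (ε / 2) (b - a), lt_min (by linarith) (by linarith), by
    have := min_le_right (ε / 2) (b - a); linarith, ?_⟩
  set δ := min (ε / 2) (b - a) with hδ_def
  have hδpos : 0 < δ := lt_min (by linarith) (by linarith)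
  have hmono : StrictMonoOn g (Set.Icc a (a + δ)) := by
    apply strictMonoOn_of_deriv_pos (convex_Icc _ _)
    · exact fun t _ => (hgd t).continuousAt.continuousWithinAt
    · intro t ht
      rw [interior_Icc] at ht
      rw [(hgd t).deriv]
      apply hball
      have h1 : t - a < δ := by linarith [ht.2, ht.1]
      have : δ ≤ ε / 2 := min_le_left _ _
      rw [Real.dist_eq, abs_lt]
      constructor <;> linarith [ht.1, ht.2]
  intro t ht
  have h := hmono ⟨le_rfl, by linarith [hδpos]⟩ ⟨ht.1.le, ht.2⟩ ht.1
  have hga : g a = 0 := by simp [hg_def, ha]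
  rw [hga] at h
  simp only [hg_def] at h
  linarith
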